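/- The pseudospin expectation obeys the symmetry F(γ, β, θ) = F(β′, γ′, θ) for all γ, β ∈ ℝ^p and all θ ∈ ℝ, where γ′ = (γ_p, …, γ_1) and β′ = (β_p, …, β_1) are the reversed tuples; i.e., reversing the sequence and exchanging the roles of the γ- and β-angles leaves the expectation unchanged. -/

import Mathlib

open Matrix Complex Real

noncomputable section

def σx : Matrix (Fin 2) (Fin 2) ℂ := !![0, 1; 1, 0]

def σz : Matrix (Fin 2) (Fin 2) ℂ := !![1, 0; 0, -1]

/-- The Bloch axis `n(θ) = cos θ · σz + sin θ · σx`. -/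
def nvec (θ : ℝ) : Matrix (Fin 2) (Fin 2) ℂ :=
  (Real.cos θ : ℂ) • σz + (Real.sin θ : ℂ) • σx

/-- `U_B(β) = exp(−2iβ·σz)`. -/
def UB (β : ℝ) : Matrix (Fin 2) (Fin 2) ℂ :=
  NormedSpace.exp ((-2 * β * Complex.I) • σz)

/-- `U_C(γ,θ) = exp(−2iγ·n(θ))`. -/
def UC (γ θ : ℝ) : Matrix (Fin 2) (Fin 2) ℂ :=
  NormedSpace.exp ((-2 * γ * Complex.I) • nvec θ)

/-- The level-`p` QAOA circuit `U(γ,β,θ) = U_B(β_p)·U_C(γ_p,θ)·⋯·U_B(β_1)·U_C(γ_1,θ)`. -/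
def Uqaoa (p : ℕ) (γ β : Fin p → ℝ) (θ : ℝ) : Matrix (Fin 2) (Fin 2) ℂ :=
  ((List.ofFn fun i : Fin p => UB (β i) * UC (γ i) θ).reverse).prod

/-- The pseudospin expectation `F(γ,β,θ) = Re tr[n(θ)·U·σz·U†]`. -/
def Fps (p : ℕ) (γ β : Fin p → ℝ) (θ : ℝ) : ℝ :=
  (Matrix.trace (nvec θ * Uqaoa p γ β θ * σz * (Uqaoa p γ β θ)ᴴ)).re

end
noncomputable section

namespace PseudospinAux

lemma nvec_eq (θ : ℝ) :
    nvec θ = !![(Real.cos θ : ℂ), (Real.sin θ : ℂ); (Real.sin θ : ℂ), -(Real.cos θ : ℂ)] := by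
  ext i j
  fin_cases i <;> fin_cases j <;> simp [nvec, σx, σz]

lemma nvec_mul_self (θ : ℝ) : nvec θ * nvec θ = 1 := by
  rw [nvec_eq]
  ext i j
  fin_cases i <;> fin_cases j <;>
    · simp [Matrix.mul_apply, Fin.sum_univ_succ, Matrix.one_apply]
      norm_cast
      nlinarith [Real.sin_sq_add_cos_sq θ]

lemma conj_sz (θ : ℝ) : nvec (θ / 2) * σz * nvec (θ / 2) = nvec θ := by
  have hθ : 2 * (θ / 2) = θ := by ring
  have hc : (Real.cos θ : ℂ) = (Real.cos (θ/2) : ℂ) ^ 2 - (Real.sin (θ/2) : ℂ) ^ 2 := by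
    rw [← hθ, Real.cos_two_mul']; push_cast; ring
  have hs : (Real.sin θ : ℂ) = 2 * (Real.sin (θ/2) : ℂ) * (Real.cos (θ/2) : ℂ) := by
    rw [← hθ, Real.sin_two_mul]; push_cast; ring
  rw [nvec_eq, nvec_eq θ, σz]
  ext i j
  fin_cases i <;> fin_cases j <;>
    · simp [Matrix.mul_apply, Fin.sum_univ_succ, hc, hs]
      ring

lemma conj_n (θ : ℝ) : nvec (θ / 2) * nvec θ * nvec (θ / 2) = σz := by
  have h := conj_sz θ
  have hS := nvec_mul_self (θ / 2)
  calc nvec (θ/2) * nvec θ * nvec (θ/2)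
      = nvec (θ/2) * (nvec (θ/2) * σz * nvec (θ/2)) * nvec (θ/2) := by rw [h]
    _ = (nvec (θ/2) * nvec (θ/2)) * σz * (nvec (θ/2) * nvec (θ/2)) := by
        simp only [mul_assoc]
    _ = σz := by rw [hS]; simp

lemma σz_transpose : σzᵀ = σz := by
  ext i j; fin_cases i <;> fin_cases j <;> simp [σz]

lemma σx_transpose : σxᵀ = σx := by
  ext i j; fin_cases i <;> fin_cases j <;> simp [σx]

lemma nvec_transpose (θ : ℝ) : (nvec θ)ᵀ = nvec θ := by
  simp [nvec, Matrix.transpose_add, Matrix.transpose_smul, σz_transpose, σx_transpose]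

lemma nvec_conjTranspose (θ : ℝ) : (nvec θ)ᴴ = nvec θ := by
  rw [nvec_eq]
  ext i j
  fin_cases i <;> fin_cases j <;>
    simp [← Complex.ofReal_cos, ← Complex.ofReal_sin, Complex.conj_ofReal]

lemma UB_transpose (β : ℝ) : (UB β)ᵀ = UB β := by
  rw [UB, ← Matrix.exp_transpose, Matrix.transpose_smul, σz_transpose]

lemma UC_transpose (γ θ : ℝ) : (UC γ θ)ᵀ = UC γ θ := by
  rw [UC, ← Matrix.exp_transpose, Matrix.transpose_smul, nvec_transpose]

/-- `nvec θ` as a unit. -/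
def Sunit (θ : ℝ) : (Matrix (Fin 2) (Fin 2) ℂ)ˣ :=
  ⟨nvec θ, nvec θ, nvec_mul_self θ, nvec_mul_self θ⟩

lemma conj_exp (θ : ℝ) (A : Matrix (Fin 2) (Fin 2) ℂ) :
    nvec θ * NormedSpace.exp A * nvec θ =
      NormedSpace.exp (nvec θ * A * nvec θ) := by
  have h := Matrix.exp_units_conj (Sunit θ) A
  have hinv : ((Sunit θ)⁻¹ : (Matrix (Fin 2) (Fin 2) ℂ)ˣ) = (Sunit θ : Matrix (Fin 2) (Fin 2) ℂ) := rfl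
  simpa [Sunit, hinv] using h.symm

lemma conj_UB (θ β : ℝ) : nvec (θ / 2) * UB β * nvec (θ / 2) = UC β θ := by
  rw [UB, UC, conj_exp]
  congr 1
  rw [Matrix.mul_smul, Matrix.smul_mul, conj_sz]

lemma conj_UC (θ γ : ℝ) : nvec (θ / 2) * UC γ θ * nvec (θ / 2) = UB γ := by
  rw [UB, UC, conj_exp]
  congr 1
  rw [Matrix.mul_smul, Matrix.smul_mul, conj_n]

lemma conj_list_prod (S : Matrix (Fin 2) (Fin 2) ℂ) (hS : S * S = 1)
    (l : List (Matrix (Fin 2) (Fin 2) ℂ)) :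
    S * l.prod * S = (l.map fun a => S * a * S).prod := by
  induction l with
  | nil => simpa using hS
  | cons a t ih =>
    simp only [List.map_cons, List.prod_cons, ← ih]
    simp only [mul_assoc]
    rw [← mul_assoc S S, hS, one_mul]

lemma ofFn_rev {α : Type*} {n : ℕ} (g g' : Fin n → α) (hg : ∀ i, g' i = g i.rev) :
    (List.ofFn g').reverse = List.ofFn g := by
  apply List.ext_getElem
  · simp
  · intro i h1 h2
    simp only [List.length_reverse, List.length_ofFn] at h1 h2
    rw [List.getElem_reverse]
    simp only [List.length_reverse, List.length_ofFn]
    rw [List.getElem_ofFn, List.getElem_ofFn, hg]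
    congr 1
    ext
    simp [Fin.rev]
    omega

lemma key (p : ℕ) (γ β : Fin p → ℝ) (θ : ℝ) :
    nvec (θ / 2) * (Uqaoa p γ β θ)ᵀ * nvec (θ / 2) =
      Uqaoa p (fun i => β (Fin.rev i)) (fun i => γ (Fin.rev i)) θ := by
  unfold Uqaoa
  rw [Matrix.transpose_list_prod, List.map_reverse, List.reverse_reverse, List.map_ofFn,
    conj_list_prod _ (nvec_mul_self (θ / 2)), List.map_ofFn]
  have hfun : ((fun a => nvec (θ/2) * a * nvec (θ/2)) ∘ transpose ∘
        fun i : Fin p => UB (β i) * UC (γ i) θ) =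
      fun i : Fin p => UB (γ i) * UC (β i) θ := by
    funext i
    simp only [Function.comp_apply, Matrix.transpose_mul, UB_transpose, UC_transpose]
    calc nvec (θ/2) * ((UC (γ i) θ) * (UB (β i))) * nvec (θ/2)
        = (nvec (θ/2) * UC (γ i) θ * nvec (θ/2)) * (nvec (θ/2) * UB (β i) * nvec (θ/2)) := by
          simp only [mul_assoc]
          rw [← mul_assoc (nvec (θ/2)) (nvec (θ/2)), nvec_mul_self, one_mul]
      _ = UB (γ i) * UC (β i) θ := by rw [conj_UC, conj_UB]
  rw [hfun,
    ofFn_rev (fun i : Fin p => UB (γ i) * UC (β i) θ)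
      (fun i => UB ((fun i => γ i.rev) i) * UC ((fun i => β i.rev) i) θ) (fun i => rfl)]

end PseudospinAux

open PseudospinAux in
/-- Reversing the angle sequence and exchanging the roles of the γ- and β-angles leaves
the pseudospin expectation unchanged: `F(γ,β,θ) = F(β′,γ′,θ)`. -/
theorem pseudospin_reverse_swap_symmetry
    (p : ℕ) (hp : 1 ≤ p) (γ β : Fin p → ℝ) (θ : ℝ) :
    Fps p γ β θ = Fps p (fun i => β (Fin.rev i)) (fun i => γ (Fin.rev i)) θ := by
  unfold Fps
  refine congrArg Complex.re ?_
  set U := Uqaoa p γ β θ with hU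
  set S := nvec (θ / 2) with hSdef
  have hcn : S * nvec θ * S = σz := conj_n θ
  have hcz : S * σz * S = nvec θ := conj_sz θ
  have hV : Uqaoa p (fun i => β (Fin.rev i)) (fun i => γ (Fin.rev i)) θ = S * Uᵀ * S :=
    (key p γ β θ).symm
  rw [hV]
  have hSH : Sᴴ = S := nvec_conjTranspose _
  have hVH : (S * Uᵀ * S)ᴴ = S * Uᵀᴴ * S := by
    simp [Matrix.conjTranspose_mul, hSH, mul_assoc]
  rw [hVH]
  -- left side: transpose trick
  have hL : Matrix.trace (nvec θ * U * σz * Uᴴ) =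
      Matrix.trace (σz * (Uᵀ * (nvec θ * Uᴴᵀ))) := by
    rw [← Matrix.trace_transpose (nvec θ * U * σz * Uᴴ)]
    simp only [Matrix.transpose_mul, σz_transpose, nvec_transpose]
    rw [Matrix.trace_mul_comm]
    simp only [mul_assoc]
  -- right side: conjugation trick
  have hR : Matrix.trace (nvec θ * (S * Uᵀ * S) * σz * (S * Uᵀᴴ * S)) =
      Matrix.trace (σz * (Uᵀ * (nvec θ * Uᵀᴴ))) := by
    have h0 : nvec θ * (S * Uᵀ * S) * σz * (S * Uᵀᴴ * S) =
        (nvec θ * (S * Uᵀ * S) * σz * (S * Uᵀᴴ)) * S := by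
      simp only [mul_assoc]
    rw [h0, Matrix.trace_mul_comm (nvec θ * (S * Uᵀ * S) * σz * (S * Uᵀᴴ)) S]
    have h1 : S * (nvec θ * (S * Uᵀ * S) * σz * (S * Uᵀᴴ)) =
        (S * nvec θ * S) * (Uᵀ * ((S * σz * S) * Uᵀᴴ)) := by
      simp only [mul_assoc]
    rw [h1, hcn, hcz]
  rw [hL, hR]
  have hUT : Uᴴᵀ = Uᵀᴴ := by
    ext i j
    simp [Matrix.conjTranspose_apply, Matrix.transpose_apply]
  rw [hUT]
end
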